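/- Let A and B be positive definite n×n complex matrices and let P be the orthogonal projection onto the range of (B − A)_+. Then tr(P A (B − A)) ≥ 0. -/

import Mathlib

open Matrix
open scoped ComplexOrder

/-- The matrix absolute value `|X| = (X*X)^{1/2}`, via the continuous functional calculus. -/
noncomputable def mAbs {m : ℕ} (X : Matrix (Fin m) (Fin m) ℂ) : Matrix (Fin m) (Fin m) ℂ :=
  cfc (fun x : ℝ => |x|) X

/-- The positive part `X₊ = (|X| + X)/2` of a Hermitian matrix. -/
noncomputable def mPosPart {m : ℕ} (X : Matrix (Fin m) (Fin m) ℂ) : Matrix (Fin m) (Fin m) ℂ :=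
  (2 : ℝ)⁻¹ • (mAbs X + X)

lemma psd_trace_nonneg {n : ℕ} {M : Matrix (Fin n) (Fin n) ℂ} (hM : M.PosSemidef) :
    0 ≤ M.trace := by
  rw [Matrix.trace]
  apply Finset.sum_nonneg
  intro i _
  have := hM.dotProduct_mulVec_nonneg (Pi.single i 1)
  simpa [dotProduct, Pi.single_apply, Matrix.mulVec, Finset.sum_ite_eq] using this

lemma mPosPart_eq_cfc {n : ℕ} (X : Matrix (Fin n) (Fin n) ℂ) (hX : IsSelfAdjoint X) :
    mPosPart X = cfc (fun x : ℝ => (2:ℝ)⁻¹ * (|x| + x)) X := by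
  rw [mPosPart, mAbs]
  rw [show (fun x : ℝ => (2:ℝ)⁻¹ * (|x| + x)) = fun x : ℝ => (2:ℝ)⁻¹ • (|x| + x) from rfl]
  rw [cfc_smul (2:ℝ)⁻¹ _ X, cfc_add X (fun x => |x|) (fun x => x)]
  rw [cfc_id' ℝ X hX]

lemma mPosPart_posSemidef {n : ℕ} (X : Matrix (Fin n) (Fin n) ℂ) (hX : IsSelfAdjoint X) :
    (mPosPart X).PosSemidef := by
  rw [mPosPart_eq_cfc X hX]
  have hX' : X.IsHermitian := hX
  rw [hX'.cfc_eq]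
  rw [Matrix.IsHermitian.cfc]
  apply Matrix.PosSemidef.mul_mul_conjTranspose_same ?_ _
  · apply Matrix.PosSemidef.diagonal
    intro i
    simp only [Function.comp_apply, Pi.zero_apply]
    rw [RCLike.ofReal_nonneg]
    nlinarith [neg_abs_le (hX'.eigenvalues i)]

lemma mul_mPosPart {n : ℕ} (X : Matrix (Fin n) (Fin n) ℂ) (hX : IsSelfAdjoint X) :
    X * mPosPart X = mPosPart X * mPosPart X := by
  rw [mPosPart_eq_cfc X hX]
  nth_rewrite 1 [← cfc_id' ℝ X hX]
  rw [← cfc_mul _ _ X, ← cfc_mul _ _ X]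
  apply cfc_congr
  intro x _
  rcases abs_cases x with ⟨h, _⟩ | ⟨h, _⟩ <;> simp only [h] <;> ring

lemma ext_mulVec {n : ℕ} {M N : Matrix (Fin n) (Fin n) ℂ}
    (h : ∀ v, M *ᵥ v = N *ᵥ v) : M = N := by
  ext i j
  have := congrFun (h (Pi.single j 1)) i
  simpa [mulVec_single] using this

open scoped MatrixOrder in
lemma psd_eq_conjTranspose_mul {n : ℕ} {Q : Matrix (Fin n) (Fin n) ℂ} (h : Q.PosSemidef) :
    ∃ C : Matrix (Fin n) (Fin n) ℂ, Q = Cᴴ * C :=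
  CStarAlgebra.nonneg_iff_eq_star_mul_self.mp h.nonneg

theorem stmt_5 {n : ℕ} (A B P : Matrix (Fin n) (Fin n) ℂ)
    (hA : A.PosDef) (hB : B.PosDef)
    (hP₁ : P.IsHermitian) (hP₂ : P * P = P)
    (hP₃ : LinearMap.range P.mulVecLin = LinearMap.range (mPosPart (B - A)).mulVecLin) :
    0 ≤ (P * A * (B - A)).trace := by
  set X := B - A with hXdef
  have hX : IsSelfAdjoint X := hB.1.sub hA.1
  set Q := mPosPart X with hQdef
  have hQpsd : Q.PosSemidef := mPosPart_posSemidef X hX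
  have hQherm : Q.IsHermitian := hQpsd.1
  -- P acts as identity on Q's range
  have hPQ : P * Q = Q := by
    apply ext_mulVec
    intro v
    have hmem : Q *ᵥ v ∈ LinearMap.range P.mulVecLin := by
      rw [hP₃]; exact ⟨v, rfl⟩
    obtain ⟨w, hw⟩ := hmem
    rw [Matrix.mulVecLin_apply] at hw
    rw [← Matrix.mulVec_mulVec, ← hw, Matrix.mulVec_mulVec, hP₂]
  have hQP : Q * P = Q := by
    have := congrArg Matrix.conjTranspose hPQ
    simpa [Matrix.conjTranspose_mul, hQherm.eq, hP₁.eq] using this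
  -- the negative part kills range of Q
  set R := Q - X with hRdef
  have hRQ : R * Q = 0 := by
    have h1 : X * Q = Q * Q := mul_mPosPart X hX
    rw [hRdef, Matrix.sub_mul, h1, sub_self]
  have hRP : R * P = 0 := by
    apply ext_mulVec
    intro v
    have hmem : P *ᵥ v ∈ LinearMap.range Q.mulVecLin := by
      rw [← hP₃]; exact ⟨v, rfl⟩
    obtain ⟨w, hw⟩ := hmem
    rw [Matrix.mulVecLin_apply] at hw
    rw [← Matrix.mulVec_mulVec, ← hw, Matrix.mulVec_mulVec, hRQ]
    simp
  have hXP : X * P = Q := by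
    have : (Q - R) * P = Q * P - R * P := Matrix.sub_mul _ _ _
    rw [hRdef, sub_sub_cancel] at this
    rw [this, hQP, hRP, sub_zero]
  have htr : (P * A * X).trace = (Q * A).trace := by
    rw [Matrix.trace_mul_comm, ← mul_assoc, hXP]
  rw [htr]
  obtain ⟨C, hC⟩ : ∃ C : Matrix (Fin n) (Fin n) ℂ, Q = Cᴴ * C :=
    psd_eq_conjTranspose_mul hQpsd
  rw [hC, mul_assoc, Matrix.trace_mul_comm]

  exact psd_trace_nonneg (hA.posSemidef.mul_mul_conjTranspose_same C)
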